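/- Let E be a finite-dimensional complex normed vector space with open unit ball B, and let f : B → B be a holomorphic map with f(0) = 0. Then the Fréchet derivative f'(0) has operator norm at most 1: ‖f'(0)·v‖ ≤ ‖v‖ for all v ∈ E. -/

import Mathlib

/-- (Schwarz-type lemma.) Let `E` be a finite-dimensional complex
normed space with open unit ball `B` and `f : B → B` holomorphic with `f 0 = 0`.
Then `‖f'(0) v‖ ≤ ‖v‖` for all `v ∈ E`. -/
theorem stmt10
    {E : Type*} [NormedAddCommGroup E] [NormedSpace ℂ E] [FiniteDimensional ℂ E]
    (B : Set E) (hB : B = Metric.ball 0 1)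
    (f : E → E) (hf : AnalyticOnNhd ℂ f B) (hmaps : Set.MapsTo f B B)
    (hf0 : f 0 = 0) :
    ∀ v : E, ‖fderiv ℂ f 0 v‖ ≤ ‖v‖ := by
  intro v
  rcases eq_or_ne v 0 with rfl | hv
  · simp
  subst hB
  have hv' : (0:ℝ) < ‖v‖ := norm_pos_iff.2 hv
  set u : E := ‖v‖⁻¹ • v with hu
  have hnu : ‖u‖ = 1 := by
    simp [hu, norm_smul, abs_of_nonneg (inv_nonneg.2 hv'.le), inv_mul_cancel₀ hv'.ne']
  have h0B : (0:E) ∈ Metric.ball (0:E) 1 := by simp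
  -- auxiliary map g : ℂ → E
  set g : ℂ → E := fun z => f (z • u) with hg
  have hmem : ∀ z ∈ Metric.ball (0:ℂ) 1, z • u ∈ Metric.ball (0:E) 1 := by
    intro z hz
    simp only [Metric.mem_ball, dist_zero_right] at hz ⊢
    rw [norm_smul, hnu, mul_one]; exact hz
  have hgd : DifferentiableOn ℂ g (Metric.ball 0 1) := by
    intro z hz
    exact (((hf _ (hmem z hz)).differentiableAt.comp z
      ((differentiable_id.smul_const u) z)).differentiableWithinAt)
  have hgmaps : Set.MapsTo g (Metric.ball 0 1) (Metric.ball (g 0) 1) := by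
    intro z hz
    have : g 0 = 0 := by simp [hg, hf0]
    rw [this]
    exact hmaps (hmem z hz)
  have hderiv : HasDerivAt g (fderiv ℂ f 0 u) 0 := by
    have h1 : HasDerivAt (fun z : ℂ => z • u) ((1:ℂ) • u) 0 :=
      (hasDerivAt_id (0:ℂ)).smul_const u
    have h2 : HasFDerivAt f (fderiv ℂ f 0) ((0:ℂ) • u) := by
      rw [zero_smul]
      exact (hf 0 h0B).differentiableAt.hasFDerivAt
    simpa [hg, Function.comp_def] using h2.comp_hasDerivAt 0 h1
  have key := Complex.norm_deriv_le_div_of_mapsTo_ball hgd (hgmaps.mono_right Metric.ball_subset_closedBall) zero_lt_one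
  rw [hderiv.deriv] at key
  have hvu : v = ‖v‖ • u := by
    rw [hu, smul_smul, mul_inv_cancel₀ hv'.ne', one_smul]
  calc ‖fderiv ℂ f 0 v‖ = ‖v‖ * ‖fderiv ℂ f 0 u‖ := by
        rw [hvu, (fderiv ℂ f 0).map_smul_of_tower, norm_smul, Real.norm_eq_abs,
          abs_of_nonneg hv'.le, norm_smul, Real.norm_eq_abs,
          abs_of_nonneg hv'.le, hnu, mul_one]
    _ ≤ ‖v‖ * 1 := by
        apply mul_le_mul_of_nonneg_left _ hv'.le
        simpa using key
    _ = ‖v‖ := mul_one _
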